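/- arXiv:1909.06207 — 4 statements merged into one kernel-verified Lean document; each statement's English description precedes it below -/
import Mathlib

section
/- Interval Newton-Moore existence: let X = ∏_{i=1}^n [a_i,b_i] ⊂ ℝ^n be a product of compact intervals, F : ℝ^n → ℝ^n be C¹, and x₀ ∈ X. Suppose A is a set of n×n matrices containing DF(x) for every x ∈ X, every A ∈ 𝒜 is invertible, and for some fixed invertible matrix representative the Newton set N(x₀,X) = {x₀ - A⁻¹ F(x₀) : A ∈ 𝒜} satisfies N(x₀,X) ⊆ interior(X). Then F has a zero x* ∈ X, and moreover x* ∈ N(x₀,X). -/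
open Set Filter Topology MeasureTheory

attribute [local instance] Matrix.normedAddCommGroup Matrix.normedSpace

namespace IntervalNewtonAux

variable {n : ℕ}

/-- A continuous linear equivalence built from an invertible matrix. -/
lemma exists_clequiv (A : Matrix (Fin n) (Fin n) ℝ) (hA : IsUnit A) :
    ∃ e : (Fin n → ℝ) ≃L[ℝ] (Fin n → ℝ),
      ((e : (Fin n → ℝ) →L[ℝ] (Fin n → ℝ)) =
        LinearMap.toContinuousLinearMap A.mulVecLin) ∧
      ∀ v, e.symm v = (A⁻¹).mulVec v := by
  have hdet : IsUnit A.det := (Matrix.isUnit_iff_isUnit_det A).1 hA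
  have h1 : A.mulVecLin ∘ₗ (A⁻¹).mulVecLin = LinearMap.id := by
    rw [← Matrix.mulVecLin_mul, Matrix.mul_nonsing_inv A hdet, Matrix.mulVecLin_one]
  have h2 : (A⁻¹).mulVecLin ∘ₗ A.mulVecLin = LinearMap.id := by
    rw [← Matrix.mulVecLin_mul, Matrix.nonsing_inv_mul A hdet, Matrix.mulVecLin_one]
  refine ⟨(LinearEquiv.ofLinear A.mulVecLin (A⁻¹).mulVecLin h1 h2).toContinuousLinearEquiv,
    ?_, ?_⟩
  · ext v
    simp [Matrix.mulVecLin_apply]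
  · intro v
    simp [Matrix.mulVecLin_apply]

/-- Mean value theorem in integral form: the difference quotient matrix lies in any
closed convex set containing all derivatives along the segment. -/
lemma mean_value
    (F : (Fin n → ℝ) → (Fin n → ℝ)) (Df : (Fin n → ℝ) → Matrix (Fin n) (Fin n) ℝ)
    (hDf : ∀ x, HasFDerivAt F (LinearMap.toContinuousLinearMap (Df x).mulVecLin) x)
    (hDfc : Continuous Df)
    (𝒜 : Set (Matrix (Fin n) (Fin n) ℝ)) (h𝒜cl : IsClosed 𝒜) (h𝒜conv : Convex ℝ 𝒜)
    (X : Set (Fin n → ℝ)) (hXconv : Convex ℝ X) (h𝒜encl : ∀ x ∈ X, Df x ∈ 𝒜)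
    (x₀ x : Fin n → ℝ) (hx₀ : x₀ ∈ X) (hx : x ∈ X) :
    ∃ A ∈ 𝒜, A.mulVec (x - x₀) = F x - F x₀ := by
  set γ : ℝ → (Fin n → ℝ) := fun t => x₀ + t • (x - x₀) with hγ
  have hγmem : ∀ t ∈ Icc (0:ℝ) 1, γ t ∈ X := by
    intro t ht
    have h := hXconv hx₀ hx (by linarith [ht.2] : (0:ℝ) ≤ 1 - t) ht.1 (by ring)
    have heq : γ t = (1 - t) • x₀ + t • x := by
      simp only [hγ, smul_sub, sub_smul, one_smul]; abel
    rw [heq]; exact h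
  have hγc : Continuous γ := by continuity
  have hcomp : Continuous fun t => Df (γ t) := hDfc.comp hγc
  -- the linear map `M ↦ M.mulVec (x - x₀)`
  let L₀ : Matrix (Fin n) (Fin n) ℝ →ₗ[ℝ] (Fin n → ℝ) :=
    { toFun := fun M => M.mulVec (x - x₀)
      map_add' := fun M N => Matrix.add_mulVec M N _
      map_smul' := fun c M => by simp [Matrix.smul_mulVec] }
  let L : Matrix (Fin n) (Fin n) ℝ →L[ℝ] (Fin n → ℝ) := LinearMap.toContinuousLinearMap L₀
  have hLapp : ∀ M : Matrix (Fin n) (Fin n) ℝ, L M = M.mulVec (x - x₀) := fun M => rfl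
  set μ : Measure ℝ := volume.restrict (Ioc (0:ℝ) 1) with hμ
  have hprob : IsProbabilityMeasure μ := ⟨by simp [hμ, Real.volume_Ioc]⟩
  have hint : @IntervalIntegrable _ PseudoMetricSpace.toUniformSpace.toTopologicalSpace _
      (fun t => Df (γ t)) volume 0 1 :=
    hcomp.intervalIntegrable 0 1
  set A : Matrix (Fin n) (Fin n) ℝ := ∫ t in (0:ℝ)..1, Df (γ t) with hA
  have hAμ : A = ∫ t, Df (γ t) ∂μ := by
    rw [hA, intervalIntegral.integral_of_le zero_le_one, hμ]
  have hAmem : A ∈ 𝒜 := by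
    rw [hAμ]
    refine h𝒜conv.integral_mem h𝒜cl ?_ ?_
    · rw [hμ, ae_restrict_iff' measurableSet_Ioc]
      exact ae_of_all _ fun t ht => h𝒜encl _ (hγmem t ⟨ht.1.le, ht.2⟩)
    · rw [hμ]
      exact hcomp.integrableOn_Ioc
  refine ⟨A, hAmem, ?_⟩
  have hderiv : ∀ t ∈ uIcc (0:ℝ) 1,
      HasDerivAt (fun t => F (γ t)) ((Df (γ t)).mulVec (x - x₀)) t := by
    intro t _
    have hγd : HasDerivAt γ (x - x₀) t := by
      have h1 : HasDerivAt (fun s : ℝ => s • (x - x₀)) ((1:ℝ) • (x - x₀)) t :=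
        (hasDerivAt_id t).smul_const (x - x₀)
      simpa [hγ] using h1.const_add x₀
    have h2 := (hDf (γ t)).comp_hasDerivAt t hγd
    simpa [Matrix.mulVecLin_apply, Function.comp_def] using h2
  have hintd : IntervalIntegrable (fun t => (Df (γ t)).mulVec (x - x₀)) volume 0 1 := by
    have hc : Continuous fun t => (Df (γ t)).mulVec (x - x₀) := L.continuous.comp hcomp
    exact hc.intervalIntegrable 0 1
  have hFTC := intervalIntegral.integral_eq_sub_of_hasDerivAt hderiv hintd
  have hγ1 : γ 1 = x := by simp [hγ]
  have hγ0 : γ 0 = x₀ := by simp [hγ]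
  rw [hγ1, hγ0] at hFTC
  have hcomm : (∫ t in (0:ℝ)..1, L (Df (γ t))) = L A := by
    rw [hA]; exact L.intervalIntegral_comp_comm hint
  calc A.mulVec (x - x₀) = L A := (hLapp A).symm
    _ = ∫ t in (0:ℝ)..1, L (Df (γ t)) := hcomm.symm
    _ = ∫ t in (0:ℝ)..1, (Df (γ t)).mulVec (x - x₀) := by simp only [hLapp]
    _ = F x - F x₀ := hFTC

end IntervalNewtonAux

/-- Interval Newton–Moore method, existence part: if the interval Newton set
`N(x₀,X) = {x₀ - A⁻¹ F(x₀) : A ∈ 𝒜}` is contained in the interior of the box `X`,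
then `F` has a zero in `X`, which moreover belongs to `N(x₀,X)`. -/
theorem interval_newton_moore_existence
    (n : ℕ) (a b : Fin n → ℝ) (hab : ∀ i, a i ≤ b i)
    (F : (Fin n → ℝ) → (Fin n → ℝ))
    (Df : (Fin n → ℝ) → Matrix (Fin n) (Fin n) ℝ)
    (X : Set (Fin n → ℝ))
    (hX : X = Set.univ.pi fun i => Set.Icc (a i) (b i))
    (hF : ContDiff ℝ 1 F)
    (hDf : ∀ x, HasFDerivAt F (LinearMap.toContinuousLinearMap (Df x).mulVecLin) x)
    (𝒜 : Set (Matrix (Fin n) (Fin n) ℝ))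
    (h𝒜comp : IsCompact 𝒜) (h𝒜conv : Convex ℝ 𝒜)
    (h𝒜inv : ∀ A ∈ 𝒜, IsUnit A)
    (h𝒜encl : ∀ x ∈ X, Df x ∈ 𝒜)
    (x₀ : Fin n → ℝ) (hx₀ : x₀ ∈ X)
    (N : Set (Fin n → ℝ))
    (hN : N = {y | ∃ A ∈ 𝒜, y = x₀ - (A⁻¹).mulVec (F x₀)})
    (hNX : N ⊆ interior X) :
    ∃ x' ∈ X, F x' = 0 ∧ x' ∈ N := by
  classical
  have hXcomp : IsCompact X := by
    rw [hX]; exact isCompact_univ_pi fun i => isCompact_Icc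
  have hXclosed : IsClosed X := hXcomp.isClosed
  have hXconv : Convex ℝ X := by
    rw [hX]; exact convex_pi fun i _ => convex_Icc _ _
  -- continuity of Df
  have hfd : ∀ x, fderiv ℝ F x = LinearMap.toContinuousLinearMap (Df x).mulVecLin :=
    fun x => (hDf x).fderiv
  have hDfc : Continuous Df := by
    apply continuous_matrix
    intro i j
    have hEq : (fun x => Df x i j) = fun x => fderiv ℝ F x (Pi.single j 1) i := by
      funext x
      rw [hfd]
      simp [Matrix.mulVecLin_apply, Matrix.mulVec_single]
    rw [hEq]
    exact (continuous_apply i).comp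
      ((hF.continuous_fderiv one_ne_zero).clm_apply continuous_const)
  have hMV : ∀ x ∈ X, ∃ A ∈ 𝒜, A.mulVec (x - x₀) = F x - F x₀ := fun x hx =>
    IntervalNewtonAux.mean_value F Df hDf hDfc 𝒜 h𝒜comp.isClosed h𝒜conv X hXconv h𝒜encl
      x₀ x hx₀ hx
  set v₀ := F x₀ with hv₀
  -- compact set of solution pairs
  set C : Set (ℝ × (Fin n → ℝ)) :=
    {p | p.1 ∈ Icc (0:ℝ) 1 ∧ p.2 ∈ X ∧ F p.2 = (1 - p.1) • v₀} with hC
  have hCclosed : IsClosed C := by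
    refine (isClosed_Icc.preimage continuous_fst).inter
      ((hXclosed.preimage continuous_snd).inter ?_)
    exact isClosed_eq (hF.continuous.comp continuous_snd)
      ((continuous_const.sub continuous_fst).smul continuous_const)
  have hCcomp : IsCompact C :=
    (isCompact_Icc.prod hXcomp).of_isClosed_subset hCclosed fun p hp => ⟨hp.1, hp.2.1⟩
  set S : Set ℝ := Prod.fst '' C with hS
  have hScomp : IsCompact S := hCcomp.image continuous_fst
  have hSne : (0:ℝ) ∈ S := ⟨(0, x₀), ⟨⟨le_refl 0, zero_le_one⟩, hx₀, by simp [hv₀]⟩, rfl⟩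
  have hSsub : S ⊆ Icc (0:ℝ) 1 := by
    rintro t ⟨p, hp, rfl⟩; exact hp.1
  have hSbdd : BddAbove S := ⟨1, fun s hs => (hSsub hs).2⟩
  set τ := sSup S with hτ
  have hτS : τ ∈ S := hScomp.sSup_mem ⟨0, hSne⟩
  have hτIcc : τ ∈ Icc (0:ℝ) 1 := hSsub hτS
  -- any solution at a level t > 0 has the Newton form
  have hwitness : ∀ t : ℝ, ∀ x ∈ X, F x = (1 - t) • v₀ →
      (∃ A ∈ 𝒜, x = x₀ - t • ((A⁻¹).mulVec v₀)) := by
    intro t x hx hFx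
    obtain ⟨A, hA𝒜, hAeq⟩ := hMV x hx
    have hdet : IsUnit A.det := (Matrix.isUnit_iff_isUnit_det A).1 (h𝒜inv A hA𝒜)
    refine ⟨A, hA𝒜, ?_⟩
    have h1 : A.mulVec (x - x₀) = (-t) • v₀ := by
      rw [hAeq, hFx, sub_smul, one_smul, neg_smul]; abel
    have h2 : x - x₀ = (-t) • ((A⁻¹).mulVec v₀) := by
      have h := congrArg (A⁻¹).mulVec h1
      rwa [Matrix.mulVec_mulVec, Matrix.nonsing_inv_mul A hdet, Matrix.one_mulVec,
        Matrix.mulVec_smul] at h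
    have h3 : x = x₀ + (-t) • ((A⁻¹).mulVec v₀) := by rw [← h2]; abel
    rw [h3, neg_smul]; abel
  -- any solution at level t > 0 lies in the interior of X
  have hinterior : ∀ t : ℝ, 0 < t → t ≤ 1 → ∀ x ∈ X, F x = (1 - t) • v₀ →
      x ∈ interior X := by
    intro t ht ht1 x hx hFx
    obtain ⟨A, hA𝒜, hxval⟩ := hwitness t x hx hFx
    have hqN : x₀ - (A⁻¹).mulVec v₀ ∈ N := by
      rw [hN]; exact ⟨A, hA𝒜, rfl⟩
    have hq : x₀ - (A⁻¹).mulVec v₀ ∈ interior X := hNX hqN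
    have hcombo := hXconv.combo_interior_closure_mem_interior hq
      (subset_closure hx₀) ht (by linarith : (0:ℝ) ≤ 1 - t) (by ring)
    have hxeq : x = t • (x₀ - (A⁻¹).mulVec v₀) + (1 - t) • x₀ := by
      rw [hxval, smul_sub, sub_smul, one_smul]; abel
    rw [hxeq]; exact hcombo
  -- the key claim: τ = 1
  have hτ1 : τ = 1 := by
    by_contra hne
    have hτlt : τ < 1 := lt_of_le_of_ne hτIcc.2 hne
    obtain ⟨⟨t', x⟩, hpC, hp1⟩ := hτS
    simp only at hp1
    subst hp1
    obtain ⟨hτ01, hxX, hFx⟩ := hpC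
    dsimp only at hτ01 hxX hFx
    rcases eq_or_lt_of_le hτIcc.1 with hτ0 | hτpos
    · -- case τ = 0 : escape from the (possible) boundary point x₀
      have hA₀𝒜 : Df x₀ ∈ 𝒜 := h𝒜encl x₀ hx₀
      obtain ⟨e, he, hesymm⟩ := IntervalNewtonAux.exists_clequiv (Df x₀) (h𝒜inv _ hA₀𝒜)
      have hstrict : HasStrictFDerivAt F (e : (Fin n → ℝ) →L[ℝ] (Fin n → ℝ)) x₀ := by
        rw [he]
        exact hF.contDiffAt.hasStrictFDerivAt' (hDf x₀) one_ne_zero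
      set g := hstrict.localInverse F e x₀ with hg
      have hgv₀ : g v₀ = x₀ := hstrict.localInverse_apply_image
      set p := x₀ - ((Df x₀)⁻¹).mulVec v₀ with hpdef
      have hpint : p ∈ interior X := hNX (by rw [hN]; exact ⟨Df x₀, hA₀𝒜, rfl⟩)
      obtain ⟨ε, hεpos, hball⟩ := Metric.mem_nhds_iff.1 (mem_interior_iff_mem_nhds.1 hpint)
      set c := ε / (2 * (‖v₀‖ + 1)) with hc
      have hcpos : 0 < c := by positivity
      have hlittle := hstrict.to_localInverse.hasFDerivAt.isLittleO
      have hbound := hlittle.def hcpos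
      have hT : Tendsto (fun t : ℝ => v₀ - t • v₀) (𝓝 0) (𝓝 v₀) := by
        have hcont : Continuous fun t : ℝ => v₀ - t • v₀ :=
          continuous_const.sub (continuous_id.smul continuous_const)
        simpa using hcont.tendsto 0
      have hev : ∀ᶠ t : ℝ in 𝓝 0,
          ‖g (v₀ - t • v₀) - g v₀ - (e.symm : (Fin n → ℝ) →L[ℝ] (Fin n → ℝ))
              ((v₀ - t • v₀) - v₀)‖ ≤ c * ‖(v₀ - t • v₀) - v₀‖ ∧
          F (g (v₀ - t • v₀)) = v₀ - t • v₀ :=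
        (hT.eventually hbound).and (hT.eventually hstrict.eventually_right_inverse)
      obtain ⟨δ, hδpos, hδ⟩ := Metric.eventually_nhds_iff.1 hev
      set t := min (δ / 2) 1 with htdef
      have htpos : 0 < t := lt_min (by linarith) one_pos
      have ht1 : t ≤ 1 := min_le_right _ _
      have htδ : dist t (0:ℝ) < δ := by
        rw [Real.dist_eq, sub_zero, abs_of_pos htpos]
        calc t ≤ δ / 2 := min_le_left _ _
          _ < δ := by linarith
      obtain ⟨hbnd, hright⟩ := hδ htδ
      have hdiff : (v₀ - t • v₀) - v₀ = (-t) • v₀ := by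
        rw [neg_smul]; abel
      have hsymm : (e.symm : (Fin n → ℝ) →L[ℝ] (Fin n → ℝ)) ((v₀ - t • v₀) - v₀)
          = t • (p - x₀) := by
        have h2 : (e.symm : (Fin n → ℝ) →L[ℝ] (Fin n → ℝ)) ((-t) • v₀)
            = (-t) • e.symm v₀ := by simp
        rw [hdiff, h2, hesymm, hpdef]
        module
      set w := g (v₀ - t • v₀) - g v₀ -
        (e.symm : (Fin n → ℝ) →L[ℝ] (Fin n → ℝ)) ((v₀ - t • v₀) - v₀) with hwdef
      have hx₁ : g (v₀ - t • v₀) = x₀ + t • (p - x₀) + w := by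
        rw [hwdef, hgv₀, hsymm]; abel
      have hwsmall : ‖w‖ < t * ε := by
        have hnorm : ‖(v₀ - t • v₀) - v₀‖ = t * ‖v₀‖ := by
          rw [hdiff, norm_smul]
          simp [abs_of_pos htpos]
        have hv : (0:ℝ) ≤ ‖v₀‖ := norm_nonneg _
        have h4 : c * ‖v₀‖ < ε := by
          rw [hc, div_mul_eq_mul_div, div_lt_iff₀ (by positivity)]
          nlinarith
        calc ‖w‖ ≤ c * ‖(v₀ - t • v₀) - v₀‖ := hbnd
          _ = t * (c * ‖v₀‖) := by rw [hnorm]; ring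
          _ < t * ε := (mul_lt_mul_iff_right₀ htpos).2 h4
      have hmemX : g (v₀ - t • v₀) ∈ X := by
        rw [hx₁]
        have hq : p + t⁻¹ • w ∈ X := by
          apply hball
          rw [Metric.mem_ball, dist_eq_norm]
          have he1 : p + t⁻¹ • w - p = t⁻¹ • w := by abel
          rw [he1, norm_smul, Real.norm_eq_abs, abs_inv, abs_of_pos htpos]
          have h5 : t⁻¹ * ‖w‖ < t⁻¹ * (t * ε) :=
            mul_lt_mul_of_pos_left hwsmall (by positivity)
          rwa [← mul_assoc, inv_mul_cancel₀ htpos.ne', one_mul] at h5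
        have hcomb := hXconv hx₀ hq (by linarith : (0:ℝ) ≤ 1 - t) htpos.le (by ring)
        have hid : x₀ + t • (p - x₀) + w = (1 - t) • x₀ + t • (p + t⁻¹ • w) := by
          rw [smul_add, smul_smul, mul_inv_cancel₀ htpos.ne', one_smul, sub_smul,
            one_smul, smul_sub]
          abel
        rw [hid]; exact hcomb
      have htS : t ∈ S := by
        refine ⟨(t, g (v₀ - t • v₀)), ⟨⟨htpos.le, ht1⟩, hmemX, ?_⟩, rfl⟩
        rw [hright, sub_smul, one_smul]
      have := le_csSup hSbdd htS
      rw [← hτ] at this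
      rw [← hτ0] at this
      linarith
    · -- case 0 < τ < 1 : continue from the interior point x
      have hxint : x ∈ interior X := hinterior τ hτpos hτIcc.2 x hxX hFx
      have hAx𝒜 : Df x ∈ 𝒜 := h𝒜encl x hxX
      obtain ⟨e, he, hesymm⟩ := IntervalNewtonAux.exists_clequiv (Df x) (h𝒜inv _ hAx𝒜)
      have hstrict : HasStrictFDerivAt F (e : (Fin n → ℝ) →L[ℝ] (Fin n → ℝ)) x := by
        rw [he]
        exact hF.contDiffAt.hasStrictFDerivAt' (hDf x) one_ne_zero
      set g := hstrict.localInverse F e x with hg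
      have hgFx : g (F x) = x := hstrict.localInverse_apply_image
      have hT : Tendsto (fun t : ℝ => (1 - t) • v₀) (𝓝 τ) (𝓝 (F x)) := by
        have hcont : Continuous fun t : ℝ => (1 - t) • v₀ :=
          (continuous_const.sub continuous_id).smul continuous_const
        have := hcont.tendsto τ
        rwa [← hFx] at this
      have hTg : Tendsto (fun t : ℝ => g ((1 - t) • v₀)) (𝓝 τ) (𝓝 x) := by
        have h6 := hstrict.localInverse_continuousAt.tendsto.comp hT
        rwa [Function.comp_def, ← hg, hgFx] at h6
      have hev : ∀ᶠ t : ℝ in 𝓝 τ,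
          F (g ((1 - t) • v₀)) = (1 - t) • v₀ ∧ g ((1 - t) • v₀) ∈ interior X :=
        (hT.eventually hstrict.eventually_right_inverse).and
          (hTg.eventually (isOpen_interior.eventually_mem hxint))
      obtain ⟨δ, hδpos, hδ⟩ := Metric.eventually_nhds_iff.1 hev
      set t := min (τ + δ / 2) 1 with htdef
      have htτ : τ < t := lt_min (by linarith) hτlt
      have ht1 : t ≤ 1 := min_le_right _ _
      have htδ : dist t τ < δ := by
        rw [Real.dist_eq, abs_of_pos (by linarith : (0:ℝ) < t - τ)]
        have : t ≤ τ + δ / 2 := min_le_left _ _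
        linarith
      obtain ⟨hright, hmem⟩ := hδ htδ
      have htS : t ∈ S := by
        refine ⟨(t, g ((1 - t) • v₀)), ⟨⟨le_trans hτIcc.1 htτ.le, ht1⟩,
          interior_subset hmem, hright⟩, rfl⟩
      have := le_csSup hSbdd htS
      rw [← hτ] at this
      linarith
  -- conclude: the witness at level 1 is a zero of F, in the Newton set
  obtain ⟨⟨t', xs⟩, hpC, hp1⟩ := hτS
  simp only at hp1
  subst hp1
  obtain ⟨hτ01, hxsX, hFxs⟩ := hpC
  dsimp only at hτ01 hxsX hFxs
  have hFzero : F xs = 0 := by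
    rw [hFxs, hτ1]
    simp
  obtain ⟨A, hA𝒜, hxval⟩ := hwitness 1 xs hxsX (by rw [hFxs, hτ1])
  refine ⟨xs, hxsX, hFzero, ?_⟩
  rw [hN]
  exact ⟨A, hA𝒜, by rw [hxval, one_smul]⟩
end

section
/- Interval Newton-Moore nonexistence: with X, F, x₀ and the Newton operator N(x₀,X) as in the interval Newton method, if N(x₀,X) ∩ X = ∅ then F(x) ≠ 0 for all x ∈ X. -/
attribute [local instance] Matrix.normedAddCommGroup Matrix.normedSpace

/-- Interval Newton–Moore method, nonexistence part: if the interval Newton set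
`N(x₀,X)` is disjoint from the box `X`, then `F` has no zero in `X`. -/
theorem interval_newton_moore_nonexistence
    (n : ℕ) (a b : Fin n → ℝ) (hab : ∀ i, a i ≤ b i)
    (F : (Fin n → ℝ) → (Fin n → ℝ))
    (Df : (Fin n → ℝ) → Matrix (Fin n) (Fin n) ℝ)
    (X : Set (Fin n → ℝ))
    (hX : X = Set.univ.pi fun i => Set.Icc (a i) (b i))
    (hF : ContDiff ℝ 1 F)
    (hDf : ∀ x, HasFDerivAt F (LinearMap.toContinuousLinearMap (Df x).mulVecLin) x)
    (𝒜 : Set (Matrix (Fin n) (Fin n) ℝ))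
    (h𝒜comp : IsCompact 𝒜) (h𝒜conv : Convex ℝ 𝒜)
    (h𝒜inv : ∀ A ∈ 𝒜, IsUnit A)
    (h𝒜encl : ∀ x ∈ X, Df x ∈ 𝒜)
    (x₀ : Fin n → ℝ) (hx₀ : x₀ ∈ X)
    (N : Set (Fin n → ℝ))
    (hN : N = {y | ∃ A ∈ 𝒜, y = x₀ - (A⁻¹).mulVec (F x₀)})
    (hNX : N ∩ X = ∅) :
    ∀ x ∈ X, F x ≠ 0 := by
  intro x hx hFx
  set v : Fin n → ℝ := x - x₀ with hv
  set p : ℝ → (Fin n → ℝ) := fun t => x₀ + t • v with hp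
  have hXconv : Convex ℝ X := hX ▸ convex_pi fun i _ => convex_Icc _ _
  have hpX : ∀ t ∈ Set.Icc (0:ℝ) 1, p t ∈ X := by
    intro t ht
    have h := hXconv (x := x₀) (y := x) hx₀ hx (a := 1 - t) (b := t)
      (by linarith [ht.2]) ht.1 (by ring)
    have : p t = (1 - t) • x₀ + t • x := by
      funext i; simp [hp, hv]; ring
    rw [this]; exact h
  -- continuity of Df
  have hDfcont : Continuous Df := by
    have h1 : Continuous (fun y => fderiv ℝ F y) := hF.continuous_fderiv one_ne_zero
    have h3 : ∀ y i j, Df y i j = fderiv ℝ F y (Pi.single j 1) i := by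
      intro y i j
      rw [(hDf y).fderiv]
      simp [Matrix.mulVec_single]
    show Continuous fun y => Df y
    apply continuous_pi; intro i; apply continuous_pi; intro j
    have : (fun y => Df y i j) = fun y => fderiv ℝ F y (Pi.single j 1) i :=
      funext fun y => h3 y i j
    rw [this]
    exact (continuous_apply i).comp
      ((ContinuousLinearMap.apply ℝ (Fin n → ℝ) (Pi.single j 1)).continuous.comp h1)
  have hpcont : Continuous p := by
    apply continuous_const.add (continuous_id.smul continuous_const)
  set M : ℝ → Matrix (Fin n) (Fin n) ℝ := fun t => Df (p t) with hM
  have hMcont : Continuous M := hDfcont.comp hpcont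
  -- the linear map "multiply by v"
  set Lv : Matrix (Fin n) (Fin n) ℝ →ₗ[ℝ] (Fin n → ℝ) :=
    { toFun := fun A => A.mulVec v
      map_add' := fun A B => Matrix.add_mulVec A B v
      map_smul' := fun c A => Matrix.smul_mulVec c A v } with hLv
  set L : Matrix (Fin n) (Fin n) ℝ →L[ℝ] (Fin n → ℝ) :=
    LinearMap.toContinuousLinearMap Lv with hL
  have hψcont : Continuous (fun t => (M t).mulVec v) := L.continuous.comp hMcont
  have hderiv : ∀ t ∈ Set.uIcc (0:ℝ) 1, HasDerivAt (fun s => F (p s)) ((M t).mulVec v) t := by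
    intro t _
    have hpder : HasDerivAt p v t := by
      simpa only [one_smul, id] using ((hasDerivAt_id t).smul_const v).const_add x₀
    have h := (hDf (p t)).comp_hasDerivAt t hpder
    exact h
  have hψint : IntervalIntegrable (fun t => (M t).mulVec v) MeasureTheory.volume 0 1 :=
    hψcont.intervalIntegrable 0 1
  have hMint :=
    hMcont.intervalIntegrable (μ := MeasureTheory.volume) 0 1
  have hFTC := intervalIntegral.integral_eq_sub_of_hasDerivAt hderiv hψint
  set A : Matrix (Fin n) (Fin n) ℝ := ∫ t in (0:ℝ)..1, M t with hA
  have hcomm : (∫ t in (0:ℝ)..1, (M t).mulVec v) = A.mulVec v := by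
    have := L.intervalIntegral_comp_comm hMint (a := 0) (b := 1)
    exact this
  have hp0 : p 0 = x₀ := by funext i; simp [hp]
  have hp1 : p 1 = x := by funext i; simp [hp, hv]
  have hAv : A.mulVec v = -(F x₀) := by
    rw [← hcomm, hFTC, hp0, hp1, hFx]; simp
  -- A ∈ 𝒜
  have hA𝒜 : A ∈ 𝒜 := by
    rw [hA, intervalIntegral.integral_of_le (zero_le_one)]
    haveI : MeasureTheory.IsProbabilityMeasure
        (MeasureTheory.volume.restrict (Set.Ioc (0:ℝ) 1)) := ⟨by simp⟩
    refine h𝒜conv.integral_mem h𝒜comp.isClosed ?_ ?_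
    · filter_upwards [MeasureTheory.self_mem_ae_restrict measurableSet_Ioc] with t ht
      exact h𝒜encl _ (hpX t ⟨le_of_lt ht.1, ht.2⟩)
    · exact hMcont.integrableOn_Ioc
  have hAunit : IsUnit A.det := (Matrix.isUnit_iff_isUnit_det A).mp (h𝒜inv A hA𝒜)
  have hinv : A⁻¹ * A = 1 := Matrix.nonsing_inv_mul A hAunit
  have h1 : A⁻¹.mulVec (A.mulVec v) = v := by
    rw [Matrix.mulVec_mulVec, hinv, Matrix.one_mulVec]
  rw [hAv] at h1
  have hxN : x = x₀ - A⁻¹.mulVec (F x₀) := by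
    have h2 : A⁻¹.mulVec (F x₀) = -v := by
      rw [Matrix.mulVec_neg] at h1
      exact neg_eq_iff_eq_neg.mp h1
    rw [h2]
    funext i; simp [hv]
  have : x ∈ N ∩ X := ⟨hN ▸ ⟨A, hA𝒜, hxN⟩, hx⟩
  rw [hNX] at this
  exact this
end

section
/- Positive definiteness of the symmetrized cone matrix implies the cone condition for flows: if Q is a symmetric n×n matrix, f_c : ℝ^n → ℝ^n is C¹, B ⊂ ℝ^n is convex, and Q·Df_c(x) + (Q·Df_c(x))^T is positive definite for every x ∈ B, then for any two distinct solutions x₁, x₂ of ẋ = f_c(x) with x₁(0), x₂(0) ∈ B and x₁(0) ≠ x₂(0), one has d/dt [ Q(x₁(t) − x₂(t)) ]|_{t=0} > 0, where Q(v) denotes v^T Q v. -/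
open Matrix

private lemma hasDerivAt_quadForm {n : ℕ} (Q : Matrix (Fin n) (Fin n) ℝ)
    (u : ℝ → Fin n → ℝ) (u' : Fin n → ℝ) (t : ℝ) (hu : HasDerivAt u u' t) :
    HasDerivAt (fun t => u t ⬝ᵥ Q.mulVec (u t))
      (u' ⬝ᵥ Q.mulVec (u t) + u t ⬝ᵥ Q.mulVec u') t := by
  have hi : ∀ i, HasDerivAt (fun t => u t i) (u' i) t := hasDerivAt_pi.1 hu
  have hQ : ∀ i, HasDerivAt (fun t => Q.mulVec (u t) i) (Q.mulVec u' i) t := by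
    intro i
    simp only [Matrix.mulVec, dotProduct]
    exact HasDerivAt.fun_sum fun j _ => (hi j).const_mul _
  have h : HasDerivAt (fun t => u t ⬝ᵥ Q.mulVec (u t))
      (∑ i, (u' i * Q.mulVec (u t) i + u t i * Q.mulVec u' i)) t := by
    simp only [dotProduct]
    exact HasDerivAt.fun_sum fun i _ => (hi i).mul (hQ i)
  convert h using 1
  simp [dotProduct, Finset.sum_add_distrib]

/-- Positive definiteness of the symmetrized cone matrix implies the cone condition
for flows: if `Q·Df_c(x) + (Q·Df_c(x))ᵀ` is positive definite on a convex set `B`,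
then for any two distinct solutions of `ẋ = f_c(x)` starting in `B`, the quadratic
form `Q(x₁ − x₂) = ⟨x₁ − x₂, Q(x₁ − x₂)⟩` is strictly increasing at `t = 0`. -/
theorem posdef_symmetrization_implies_cone_condition_for_flows
    (n : ℕ) (Q : Matrix (Fin n) (Fin n) ℝ) (hQ : Q.IsSymm)
    (fc : (Fin n → ℝ) → (Fin n → ℝ)) (hfc : ContDiff ℝ 1 fc)
    (Df : (Fin n → ℝ) → Matrix (Fin n) (Fin n) ℝ)
    (hDf : ∀ x, HasFDerivAt fc (LinearMap.toContinuousLinearMap (Df x).mulVecLin) x)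
    (B : Set (Fin n → ℝ)) (hB : Convex ℝ B)
    (hpos : ∀ x ∈ B, (Q * Df x + (Q * Df x)ᵀ).PosDef)
    (x₁ x₂ : ℝ → Fin n → ℝ)
    (hx₁ : ∀ t, HasDerivAt x₁ (fc (x₁ t)) t)
    (hx₂ : ∀ t, HasDerivAt x₂ (fc (x₂ t)) t)
    (h₁B : x₁ 0 ∈ B) (h₂B : x₂ 0 ∈ B) (hne : x₁ 0 ≠ x₂ 0) :
    deriv (fun t => (x₁ t - x₂ t) ⬝ᵥ Q.mulVec (x₁ t - x₂ t)) 0 > 0 := by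
  set v : Fin n → ℝ := x₁ 0 - x₂ 0 with hv
  have hvne : v ≠ 0 := sub_ne_zero.mpr hne
  set γ : ℝ → Fin n → ℝ := fun s => x₂ 0 + s • v with hγ
  have hγ0 : γ 0 = x₂ 0 := by simp [hγ]
  have hγ1 : γ 1 = x₁ 0 := by simp [hγ, hv]
  have hγB : ∀ s ∈ Set.Icc (0:ℝ) 1, γ s ∈ B := fun s hs =>
    hB.add_smul_sub_mem h₂B h₁B hs
  have hγcont : Continuous γ := by continuity
  -- derivative of fc along the segment
  have hγderiv : ∀ s : ℝ, HasDerivAt γ v s := by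
    intro s
    simpa [hγ] using ((hasDerivAt_id s).smul_const v).const_add (x₂ 0)
  have hseg : ∀ s : ℝ, HasDerivAt (fun s => fc (γ s)) ((Df (γ s)).mulVec v) s := by
    intro s
    have := (hDf (γ s)).comp_hasDerivAt s (hγderiv s)
    exact this
  -- continuity of the integrand via fderiv
  have hfd : ∀ x, fderiv ℝ fc x = LinearMap.toContinuousLinearMap (Df x).mulVecLin :=
    fun x => (hDf x).fderiv
  have hcont : Continuous fun s => (Df (γ s)).mulVec v := by
    have : Continuous fun s => fderiv ℝ fc (γ s) v :=
      (((hfc.continuous_fderiv one_ne_zero).comp hγcont).clm_apply continuous_const)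
    simpa [hfd] using this
  -- mean value: fc (x₁ 0) - fc (x₂ 0) = ∫ s in 0..1, Df (γ s) *ᵥ v
  have hw : (∫ s in (0:ℝ)..1, (Df (γ s)).mulVec v) = fc (x₁ 0) - fc (x₂ 0) := by
    have := intervalIntegral.integral_eq_sub_of_hasDerivAt
      (f := fun s => fc (γ s)) (f' := fun s => (Df (γ s)).mulVec v)
      (fun s _ => hseg s) (hcont.intervalIntegrable 0 1)
    rw [this]
    show fc (γ 1) - fc (γ 0) = _
    rw [hγ0, hγ1]
  -- the derivative of the quadratic form
  set w : Fin n → ℝ := fc (x₁ 0) - fc (x₂ 0) with hwdef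
  have hder : HasDerivAt (fun t => (x₁ t - x₂ t) ⬝ᵥ Q.mulVec (x₁ t - x₂ t))
      (w ⬝ᵥ Q.mulVec v + v ⬝ᵥ Q.mulVec w) 0 := by
    have hu : HasDerivAt (fun t => x₁ t - x₂ t) w 0 := (hx₁ 0).sub (hx₂ 0)
    simpa [hv] using hasDerivAt_quadForm Q (fun t => x₁ t - x₂ t) w 0 hu
  rw [hder.deriv]
  -- symmetry: a ⬝ᵥ Q v = v ⬝ᵥ Q a
  have hsym : ∀ a : Fin n → ℝ, a ⬝ᵥ Q.mulVec v = v ⬝ᵥ Q.mulVec a := by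
    intro a
    rw [Matrix.dotProduct_mulVec, ← Matrix.mulVec_transpose, hQ.eq, dotProduct_comm]
  rw [hsym w]
  -- continuous linear map a ↦ v ⬝ᵥ Q a
  set L : (Fin n → ℝ) →L[ℝ] ℝ :=
    LinearMap.toContinuousLinearMap
      { toFun := fun a => v ⬝ᵥ Q.mulVec a
        map_add' := fun a b => by simp [Matrix.mulVec_add, dotProduct_add]
        map_smul' := fun c a => by simp [Matrix.mulVec_smul, dotProduct_smul] } with hL
  have hLval : ∀ a, L a = v ⬝ᵥ Q.mulVec a := fun a => rfl
  have hcomm : (∫ s in (0:ℝ)..1, L ((Df (γ s)).mulVec v)) = L w := by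
    rw [L.intervalIntegral_comp_comm (hcont.intervalIntegrable 0 1), hw]
  have hpos' : ∀ s ∈ Set.Icc (0:ℝ) 1, 0 < L ((Df (γ s)).mulVec v) := by
    intro s hs
    have hp := (hpos (γ s) (hγB s hs)).dotProduct_mulVec_pos hvne
    simp only [star_trivial] at hp
    have heq : v ⬝ᵥ ((Q * Df (γ s) + (Q * Df (γ s))ᵀ).mulVec v)
        = 2 * (v ⬝ᵥ Q.mulVec ((Df (γ s)).mulVec v)) := by
      rw [Matrix.add_mulVec, dotProduct_add]
      have h1 : v ⬝ᵥ ((Q * Df (γ s))ᵀ.mulVec v) = v ⬝ᵥ ((Q * Df (γ s)).mulVec v) := by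
        rw [Matrix.dotProduct_mulVec, ← Matrix.mulVec_transpose, Matrix.transpose_transpose,
          dotProduct_comm]
      rw [h1, ← Matrix.mulVec_mulVec]
      ring
    rw [hLval]
    nlinarith [heq ▸ hp]
  have hLcont : Continuous fun s => L ((Df (γ s)).mulVec v) := L.continuous.comp hcont
  have hint : 0 < ∫ s in (0:ℝ)..1, L ((Df (γ s)).mulVec v) :=
    intervalIntegral.intervalIntegral_pos_of_pos_on (hLcont.intervalIntegrable 0 1)
      (fun s hs => hpos' s ⟨le_of_lt hs.1, le_of_lt hs.2⟩) one_pos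
  have : 0 < L w := hcomm ▸ hint
  rw [hLval] at this
  linarith
end

section
/- If a convex compact set 𝒜 of n×n matrices satisfies that Q·A + A^T·Q is positive definite for all A ∈ 𝒜 (Q symmetric), and x, y : [0,T] → ℝ^n are distinct solutions of ẋ = f(x) such that Df(ξ) ∈ 𝒜 for all ξ on the segment joining x(t) and y(t) for each t, then the function t ↦ ⟨x(t)−y(t), Q(x(t)−y(t))⟩ is strictly increasing on [0,T]. -/
open Matrix

private lemma hasDerivAt_dot {n : ℕ} {u v : ℝ → Fin n → ℝ} {u' v' : Fin n → ℝ} {t : ℝ}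
    (hu : HasDerivAt u u' t) (hv : HasDerivAt v v' t) :
    HasDerivAt (fun t => u t ⬝ᵥ v t) (u' ⬝ᵥ v t + u t ⬝ᵥ v') t := by
  simp only [dotProduct, ← Finset.sum_add_distrib]
  exact HasDerivAt.fun_sum fun i _ =>
    ((hasDerivAt_pi.1 hu i).mul (hasDerivAt_pi.1 hv i))

private lemma dot_symm_aux {n : ℕ} {Q : Matrix (Fin n) (Fin n) ℝ} (hQ : Q.IsSymm)
    (z w : Fin n → ℝ) : z ⬝ᵥ Q *ᵥ w = (Q *ᵥ z) ⬝ᵥ w := by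
  rw [dotProduct_mulVec]
  conv_lhs => rw [← hQ]
  rw [vecMul_transpose]

/-- If a convex compact set `𝒜` of matrices satisfies that `Q·A + Aᵀ·Q` is positive
definite for all `A ∈ 𝒜` (`Q` symmetric), and `x, y` are distinct solutions of
`ẋ = f(x)` on `[0,T]` whose Jacobians along the segments joining `x(t)` and `y(t)`
all lie in `𝒜`, then `t ↦ ⟨x(t)−y(t), Q(x(t)−y(t))⟩` is strictly increasing on `[0,T]`. -/
theorem cone_quadratic_form_strictly_increasing
    (n : ℕ) (Q : Matrix (Fin n) (Fin n) ℝ) (hQ : Q.IsSymm)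
    (f : (Fin n → ℝ) → (Fin n → ℝ)) (hf : ContDiff ℝ 1 f)
    (Df : (Fin n → ℝ) → Matrix (Fin n) (Fin n) ℝ)
    (hDf : ∀ x, HasFDerivAt f (LinearMap.toContinuousLinearMap (Df x).mulVecLin) x)
    (𝒜 : Set (Matrix (Fin n) (Fin n) ℝ))
    (h𝒜comp : IsCompact 𝒜) (h𝒜conv : Convex ℝ 𝒜)
    (hpos : ∀ A ∈ 𝒜, (Q * A + Aᵀ * Q).PosDef)
    (T : ℝ) (hT : 0 < T)
    (x y : ℝ → Fin n → ℝ)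
    (hx : ∀ t ∈ Set.Icc (0 : ℝ) T, HasDerivAt x (f (x t)) t)
    (hy : ∀ t ∈ Set.Icc (0 : ℝ) T, HasDerivAt y (f (y t)) t)
    (hne : ∀ t ∈ Set.Icc (0 : ℝ) T, x t ≠ y t)
    (hseg : ∀ t ∈ Set.Icc (0 : ℝ) T, ∀ ξ ∈ segment ℝ (x t) (y t), Df ξ ∈ 𝒜) :
    StrictMonoOn (fun t => (x t - y t) ⬝ᵥ Q.mulVec (x t - y t)) (Set.Icc 0 T) := by
  -- V has derivative d t at each t of Icc
  have hVd : ∀ t ∈ Set.Icc (0:ℝ) T,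
      HasDerivAt (fun t => (x t - y t) ⬝ᵥ Q.mulVec (x t - y t))
        ((f (x t) - f (y t)) ⬝ᵥ Q *ᵥ (x t - y t)
          + (x t - y t) ⬝ᵥ Q *ᵥ (f (x t) - f (y t))) t := by
    intro t ht
    have hz : HasDerivAt (fun t => x t - y t) (f (x t) - f (y t)) t :=
      (hx t ht).sub (hy t ht)
    have hQz : HasDerivAt (fun t => Q *ᵥ (x t - y t)) (Q *ᵥ (f (x t) - f (y t))) t := by
      have := (LinearMap.toContinuousLinearMap Q.mulVecLin).hasFDerivAt.comp_hasDerivAt t hz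
      simpa [Function.comp_def] using this
    exact hasDerivAt_dot hz hQz
  -- the derivative is positive
  have hdpos : ∀ t ∈ Set.Icc (0:ℝ) T,
      0 < (f (x t) - f (y t)) ⬝ᵥ Q *ᵥ (x t - y t)
          + (x t - y t) ⬝ᵥ Q *ᵥ (f (x t) - f (y t)) := by
    intro t ht
    set z : Fin n → ℝ := x t - y t with hzdef
    have hz0 : z ≠ 0 := sub_ne_zero.2 (hne t ht)
    -- rewrite second term
    have hsymm : (x t - y t) ⬝ᵥ Q *ᵥ (f (x t) - f (y t))
        = (f (x t) - f (y t)) ⬝ᵥ Q *ᵥ (x t - y t) := by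
      rw [dot_symm_aux hQ, dotProduct_comm]
    rw [hsymm, ← two_mul]
    have : 0 < (f (x t) - f (y t)) ⬝ᵥ Q *ᵥ z := by
      set g : ℝ → Fin n → ℝ := fun s => y t + s • z with hgdef
      set φ : ℝ → ℝ := fun s => f (g s) ⬝ᵥ Q *ᵥ z with hφdef
      have hg1 : g 1 = x t := by ext i; simp [hgdef, hzdef]
      have hg0 : g 0 = y t := by ext i; simp [hgdef]
      have hmem : ∀ s ∈ Set.Icc (0:ℝ) 1, g s ∈ segment ℝ (x t) (y t) := by
        intro s hs
        refine ⟨s, 1 - s, hs.1, by linarith [hs.2], by ring, ?_⟩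
        ext i; simp [hgdef, hzdef]; ring
      have hφd : ∀ s, HasDerivAt φ (((Df (g s)) *ᵥ z) ⬝ᵥ Q *ᵥ z) s := by
        intro s
        have hgd : HasDerivAt g z s := by
          have := ((hasDerivAt_id s).smul_const z).const_add (y t)
          simpa [hgdef] using this
        have hfd : HasDerivAt (fun s => f (g s)) ((Df (g s)) *ᵥ z) s := by
          have := (hDf (g s)).comp_hasDerivAt s hgd
          simpa [Function.comp_def] using this
        have := hasDerivAt_dot hfd (hasDerivAt_const (F := Fin n → ℝ) s (Q *ᵥ z))
        simpa using this
      have hder : ∀ s ∈ Set.Icc (0:ℝ) 1, 0 < ((Df (g s)) *ᵥ z) ⬝ᵥ Q *ᵥ z := by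
        intro s hs
        set A := Df (g s) with hA
        have hA𝒜 : A ∈ 𝒜 := hseg t ht _ (hmem s hs)
        have hp := (hpos A hA𝒜).dotProduct_mulVec_pos hz0
        have hcalc : z ⬝ᵥ (Q * A + Aᵀ * Q) *ᵥ z = 2 * ((A *ᵥ z) ⬝ᵥ Q *ᵥ z) := by
          have h1 : z ⬝ᵥ (Q * A) *ᵥ z = (A *ᵥ z) ⬝ᵥ Q *ᵥ z := by
            rw [← Matrix.mulVec_mulVec, dot_symm_aux hQ, dotProduct_comm]
          have h2 : z ⬝ᵥ (Aᵀ * Q) *ᵥ z = (A *ᵥ z) ⬝ᵥ Q *ᵥ z := by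
            rw [← Matrix.mulVec_mulVec, dotProduct_mulVec, vecMul_transpose]
          rw [add_mulVec, dotProduct_add, h1, h2]; ring
        have : 0 < z ⬝ᵥ (Q * A + Aᵀ * Q) *ᵥ z := by simpa using hp
        nlinarith [this, hcalc]
      have hmono : StrictMonoOn φ (Set.Icc (0:ℝ) 1) := by
        apply strictMonoOn_of_deriv_pos (convex_Icc 0 1)
        · exact fun s _ => (hφd s).continuousAt.continuousWithinAt
        · intro s hs
          rw [interior_Icc] at hs
          rw [(hφd s).deriv]
          exact hder s ⟨le_of_lt hs.1, le_of_lt hs.2⟩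
      have h01 : φ 0 < φ 1 := hmono (by norm_num) (by norm_num) one_pos
      have : f (y t) ⬝ᵥ Q *ᵥ z < f (x t) ⬝ᵥ Q *ᵥ z := by
        simpa [hφdef, hg0, hg1] using h01
      have := sub_pos.2 this
      simpa [sub_dotProduct] using this
    linarith
  -- conclude
  apply strictMonoOn_of_deriv_pos (convex_Icc 0 T)
  · exact fun t ht => (hVd t ht).continuousAt.continuousWithinAt
  · intro t ht
    rw [interior_Icc] at ht
    have htm : t ∈ Set.Icc (0:ℝ) T := ⟨le_of_lt ht.1, le_of_lt ht.2⟩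
    rw [(hVd t htm).deriv]
    exact hdpos t htm
end
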